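/- Let Δ ⊆ ℝ_{≥0}^n be a compact convex set contained in {x ∈ ℝ_{≥0}^n : x_2+⋯+x_n ≤ x_1 ≤ μ} for some μ > 0. Define φ'(t) := vol(Δ_{x_1 ≥ t}). Then for all t ≥ 0, φ'(0) − φ'(t) ≤ t^n/n!. -/
import Mathlib


open MeasureTheory

def simplexSet (n : ℕ) (s : ℝ) : Set (Fin n → ℝ) :=
  {y | (∀ i, 0 ≤ y i) ∧ ∑ i, y i ≤ s}

lemma measurableSet_simplexSet (n : ℕ) (s : ℝ) : MeasurableSet (simplexSet n s) := by
  have h1 : MeasurableSet {y : Fin n → ℝ | ∀ i, 0 ≤ y i} := by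
    rw [Set.setOf_forall]
    exact MeasurableSet.iInter fun i =>
      measurableSet_le measurable_const (measurable_pi_apply i)
  have h2 : MeasurableSet {y : Fin n → ℝ | ∑ i, y i ≤ s} :=
    measurableSet_le (by fun_prop) measurable_const
  exact h1.inter h2

lemma simplexSet_empty {n : ℕ} {s : ℝ} (hs : s < 0) : simplexSet n s = ∅ := by
  ext y
  simp only [simplexSet, Set.mem_setOf_eq, Set.mem_empty_iff_false, iff_false, not_and]
  intro h hsum
  exact absurd (le_trans (Finset.sum_nonneg fun i _ => h i) hsum) (not_le.2 hs)

lemma volume_simplexSet : ∀ (n : ℕ) {s : ℝ}, 0 ≤ s →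
    volume (simplexSet n s) = ENNReal.ofReal (s ^ n / n.factorial) := by
  intro n
  induction n with
  | zero =>
    intro s hs
    have : simplexSet 0 s = Set.univ := by
      ext y; simp [simplexSet, hs]
    rw [this, volume_pi, Measure.pi_univ]
    simp
  | succ n ih =>
    intro s hs
    set e := MeasurableEquiv.piFinSuccAbove (fun _ : Fin (n+1) => ℝ) 0 with he
    have hmp : MeasurePreserving e.symm := (volume_preserving_piFinSuccAbove _ 0).symm e
    have hS := measurableSet_simplexSet (n+1) s
    have key : volume (simplexSet (n+1) s)
        = (volume : Measure (ℝ × (Fin n → ℝ))) (e.symm ⁻¹' simplexSet (n+1) s) :=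
      (hmp.measure_preimage hS.nullMeasurableSet).symm
    have hpre : MeasurableSet (e.symm ⁻¹' simplexSet (n+1) s) :=
      e.symm.measurable hS
    rw [key, Measure.volume_eq_prod, Measure.prod_apply hpre]
    have hslice : ∀ a : ℝ, (volume (Prod.mk a ⁻¹' (e.symm ⁻¹' simplexSet (n+1) s)))
        = (Set.Icc 0 s).indicator
            (fun a => ENNReal.ofReal ((s - a) ^ n / n.factorial)) a := by
      intro a
      have hset : Prod.mk a ⁻¹' (e.symm ⁻¹' simplexSet (n+1) s)
          = {y : Fin n → ℝ | (0 ≤ a ∧ ∀ j, 0 ≤ y j) ∧ a + ∑ j, y j ≤ s} := by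
        ext y
        have hcons : e.symm (a, y) = Fin.cons a y := by
          simp [he, MeasurableEquiv.piFinSuccAbove, Fin.insertNthEquiv,
            Fin.insertNth_zero]
        simp only [Set.mem_preimage, hcons, simplexSet, Set.mem_setOf_eq,
          Fin.sum_cons, Fin.forall_fin_succ, Fin.cons_zero, Fin.cons_succ]
      by_cases h0 : 0 ≤ a
      · by_cases h1 : a ≤ s
        · have : Prod.mk a ⁻¹' (e.symm ⁻¹' simplexSet (n+1) s) = simplexSet n (s - a) := by
            rw [hset]; ext y
            simp only [simplexSet, Set.mem_setOf_eq, h0, true_and]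
            constructor
            · rintro ⟨hy, hsum⟩; exact ⟨hy, by linarith⟩
            · rintro ⟨hy, hsum⟩; exact ⟨hy, by linarith⟩
          rw [this, ih (by linarith), Set.indicator_of_mem (Set.mem_Icc.2 ⟨h0, h1⟩)]
        · have : Prod.mk a ⁻¹' (e.symm ⁻¹' simplexSet (n+1) s) = ∅ := by
            rw [hset]; ext y
            simp only [Set.mem_setOf_eq, Set.mem_empty_iff_false, iff_false, not_and]
            rintro ⟨-, hy⟩
            have : 0 ≤ ∑ j, y j := Finset.sum_nonneg fun j _ => hy j
            intro hc; push_neg at h1; linarith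
          rw [this, Set.indicator_of_notMem (by simp [h1]), measure_empty]
      · have : Prod.mk a ⁻¹' (e.symm ⁻¹' simplexSet (n+1) s) = ∅ := by
          rw [hset]; ext y
          simp only [Set.mem_setOf_eq, Set.mem_empty_iff_false, iff_false, not_and]
          rintro ⟨h, -⟩ _
          exact absurd h h0
        rw [this, Set.indicator_of_notMem (fun hm => h0 (Set.mem_Icc.1 hm).1), measure_empty]
    simp only [hslice]
    rw [lintegral_indicator measurableSet_Icc]
    have hint : ∫⁻ a in Set.Icc 0 s, ENNReal.ofReal ((s - a) ^ n / n.factorial)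
        = ENNReal.ofReal (∫ a in Set.Icc 0 s, (s - a) ^ n / n.factorial) := by
      rw [← ofReal_integral_eq_lintegral_ofReal]
      · exact (ContinuousOn.integrableOn_compact isCompact_Icc
          (Continuous.continuousOn (by continuity)))
      · filter_upwards [ae_restrict_mem measurableSet_Icc] with a ha
        have h1 : (0:ℝ) ≤ s - a := by linarith [ha.2]
        positivity
    rw [hint]
    congr 1
    rw [MeasureTheory.integral_Icc_eq_integral_Ioc,
      ← intervalIntegral.integral_of_le hs]
    have h1 : ∫ a in (0:ℝ)..s, (s - a) ^ n / n.factorial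
        = (∫ a in (0:ℝ)..s, (s - a) ^ n) / n.factorial := by
      rw [intervalIntegral.integral_div]
    rw [h1]
    have h2 : ∫ a in (0:ℝ)..s, (s - a) ^ n = ∫ a in (s-s)..(s-0), a ^ n :=
      intervalIntegral.integral_comp_sub_left (fun x => x ^ n) s
    rw [h2]
    simp only [sub_self, sub_zero, integral_pow]
    rw [Nat.factorial_succ]
    push_cast
    field_simp
    try ring

noncomputable def shearMat (n : ℕ) [NeZero n] : Matrix (Fin n) (Fin n) ℝ :=
  fun i j => if i = j then 1 else if i = 0 then -1 else 0

lemma shearMat_det (n : ℕ) [NeZero n] : (shearMat n).det = 1 := by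
  have h : (shearMat n).BlockTriangular id := by
    intro i j hij
    simp only [id] at hij
    have h1 : i ≠ j := (ne_of_gt hij)
    have h2 : i ≠ 0 := by
      intro h; subst h; exact absurd hij (not_lt.2 (Fin.zero_le j))
    simp [shearMat, h1, h2]
  rw [Matrix.det_of_upperTriangular h]
  simp [shearMat]

lemma shear_preimage (n : ℕ) [NeZero n] (t : ℝ) :
    (Matrix.toLin' (shearMat n)) ⁻¹' (simplexSet n t)
      = {x : Fin n → ℝ | (∀ i, 0 ≤ x i) ∧
          (∑ i ∈ Finset.univ.filter (fun i : Fin n => i ≠ 0), x i) ≤ x 0 ∧ x 0 ≤ t} := by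
  ext x
  have happ : ∀ j, (Matrix.toLin' (shearMat n)) x j
      = if j = 0 then x 0 - ∑ i ∈ Finset.univ.filter (fun i : Fin n => i ≠ 0), x i
        else x j := by
    intro j
    rw [Matrix.toLin'_apply]
    by_cases hj : j = 0
    · subst hj
      simp only [if_pos rfl, Matrix.mulVec, dotProduct, shearMat]
      rw [Finset.filter_ne', ← Finset.add_sum_erase _ _ (Finset.mem_univ 0)]
      rw [if_pos rfl, one_mul, sub_eq_add_neg, ← Finset.sum_neg_distrib]
      congr 1
      refine Finset.sum_congr rfl fun i hi => ?_
      have : (0 : Fin n) ≠ i := fun h => (Finset.mem_erase.1 hi).1 h.symm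
      simp [this]
    · simp only [if_neg hj, Matrix.mulVec, dotProduct, shearMat]
      rw [Finset.sum_eq_single j]
      · simp
      · intro b _ hb
        have : j ≠ b := fun h => hb h.symm
        simp [this, hj]
      · simp
  constructor
  · rintro ⟨hpos, hsum⟩
    have hsum' : ∑ j, (Matrix.toLin' (shearMat n)) x j = x 0 := by
      rw [← Finset.add_sum_erase _ _ (Finset.mem_univ 0), happ 0, if_pos rfl]
      rw [← Finset.filter_ne']
      have : ∀ i ∈ Finset.univ.filter (fun i : Fin n => i ≠ 0),
          (Matrix.toLin' (shearMat n)) x i = x i := by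
        intro i hi
        rw [happ i, if_neg (Finset.mem_filter.1 hi).2]
      rw [Finset.sum_congr rfl this]
      ring
    have h0 : 0 ≤ x 0 - ∑ i ∈ Finset.univ.filter (fun i : Fin n => i ≠ 0), x i := by
      have := hpos 0; rwa [happ 0, if_pos rfl] at this
    refine ⟨fun i => ?_, by linarith, by rw [← hsum']; exact hsum⟩
    by_cases hi : i = 0
    · subst hi
      have hnn : 0 ≤ ∑ i ∈ Finset.univ.filter (fun i : Fin n => i ≠ 0), x i := by
        refine Finset.sum_nonneg fun i hi => ?_
        have := hpos i
        rwa [happ i, if_neg (Finset.mem_filter.1 hi).2] at this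
      linarith
    · have := hpos i; rwa [happ i, if_neg hi] at this
  · rintro ⟨hpos, hle, ht⟩
    constructor
    · intro i
      rw [happ i]
      by_cases hi : i = 0
      · simp [hi, sub_nonneg, hle]
      · simp [hi, hpos i]
    · have : ∑ j, (Matrix.toLin' (shearMat n)) x j = x 0 := by
        rw [← Finset.add_sum_erase _ _ (Finset.mem_univ 0), happ 0, if_pos rfl]
        rw [← Finset.filter_ne']
        have h : ∀ i ∈ Finset.univ.filter (fun i : Fin n => i ≠ 0),
            (Matrix.toLin' (shearMat n)) x i = x i := fun i hi => by
          rw [happ i, if_neg (Finset.mem_filter.1 hi).2]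
        rw [Finset.sum_congr rfl h]
        ring
      rw [this]; exact ht

lemma volume_invSet (n : ℕ) [NeZero n] (t : ℝ) (ht : 0 ≤ t) :
    volume {x : Fin n → ℝ | (∀ i, 0 ≤ x i) ∧
        (∑ i ∈ Finset.univ.filter (fun i : Fin n => i ≠ 0), x i) ≤ x 0 ∧ x 0 ≤ t}
      = ENNReal.ofReal (t ^ n / n.factorial) := by
  have hdet : LinearMap.det (Matrix.toLin' (shearMat n)) = 1 := by
    rw [LinearMap.det_toLin']; exact shearMat_det n
  rw [← shear_preimage n t,
    Measure.addHaar_preimage_linearMap volume (by rw [hdet]; norm_num),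
    hdet, volume_simplexSet n ht]
  simp

/-- For a compact convex set `Δ` contained in the inverted standard simplex of size `μ`,
the slice-volume differences satisfy `vol(Δ_{x₁ ≥ 0}) - vol(Δ_{x₁ ≥ t}) ≤ t^n/n!`. -/
theorem stmt9 (n : ℕ) [NeZero n] (μ : ℝ) (hμ : 0 < μ) (Δ : Set (Fin n → ℝ))
    (hc : IsCompact Δ) (hconv : Convex ℝ Δ)
    (hsub : Δ ⊆ {x : Fin n → ℝ | (∀ i, 0 ≤ x i) ∧
      (∑ i ∈ Finset.univ.filter (fun i : Fin n => i ≠ 0), x i) ≤ x 0 ∧ x 0 ≤ μ}) :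
    ∀ t : ℝ, 0 ≤ t →
      (volume (Δ ∩ {x | (0 : ℝ) ≤ x 0})).toReal - (volume (Δ ∩ {x | t ≤ x 0})).toReal
        ≤ t ^ n / n.factorial := by
  intro t ht
  have hΔ0 : Δ ∩ {x | (0:ℝ) ≤ x 0} = Δ :=
    Set.inter_eq_self_of_subset_left fun x hx => (hsub hx).1 0
  rw [hΔ0]
  have hBfin : volume (Δ ∩ {x | t ≤ x 0}) ≠ ⊤ :=
    (lt_of_le_of_lt (measure_mono Set.inter_subset_left) hc.measure_lt_top).ne
  have hsplit : volume Δ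
      ≤ volume (Δ ∩ {x | t ≤ x 0}) + ENNReal.ofReal (t ^ n / n.factorial) := by
    have hcover : Δ ⊆ (Δ ∩ {x | t ≤ x 0}) ∪ {x : Fin n → ℝ | (∀ i, 0 ≤ x i) ∧
        (∑ i ∈ Finset.univ.filter (fun i : Fin n => i ≠ 0), x i) ≤ x 0 ∧ x 0 ≤ t} := by
      intro x hx
      by_cases h : t ≤ x 0
      · exact Or.inl ⟨hx, h⟩
      · obtain ⟨h1, h2, -⟩ := hsub hx
        exact Or.inr ⟨h1, h2, le_of_not_ge h⟩
    calc volume Δ ≤ _ := measure_mono hcover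
      _ ≤ volume (Δ ∩ {x | t ≤ x 0}) + volume {x : Fin n → ℝ | (∀ i, 0 ≤ x i) ∧
            (∑ i ∈ Finset.univ.filter (fun i : Fin n => i ≠ 0), x i) ≤ x 0 ∧ x 0 ≤ t} :=
          measure_union_le _ _
      _ = _ := by rw [volume_invSet n t ht]
  have hmono := ENNReal.toReal_mono
    (by exact ENNReal.add_ne_top.2 ⟨hBfin, ENNReal.ofReal_ne_top⟩) hsplit
  rw [ENNReal.toReal_add hBfin ENNReal.ofReal_ne_top,
    ENNReal.toReal_ofReal (by positivity)] at hmono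
  linarith
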